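/- Let r ≥ 0 and let (ξ_n) and (η_n) be sequences in an S-metric space (X,S) such that S(ξ_n,ξ_n,η_n) → 0 as n → ∞. Then (ξ_n) is rough statistically convergent to ξ with roughness degree r if and only if (η_n) is rough statistically convergent to ξ with roughness degree r. -/

import Mathlib

open Filter

open scoped Classical in
/-- Natural density: `A ⊆ ℕ` has density `d` if `|{k ∈ A : k < n}|/n → d`. -/
def HasDensity (A : Set ℕ) (d : ℝ) : Prop :=
  Filter.Tendsto
    (fun n : ℕ => (((Finset.range n).filter (fun k => k ∈ A)).card : ℝ) / n)
    Filter.atTop (nhds d)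

/-- `S` is an S-metric on `X`. -/
structure IsSMetric {X : Type*} (S : X → X → X → ℝ) : Prop where
  nonneg : ∀ x y z, 0 ≤ S x y z
  eq_zero_iff : ∀ x y z, S x y z = 0 ↔ x = y ∧ y = z
  triangle : ∀ x y z a, S x y z ≤ S x x a + S y y a + S z z a

/-- Ordinary convergence of a sequence in an S-metric space. -/
def SConvergesTo {X : Type*} (S : X → X → X → ℝ) (x : ℕ → X) (l : X) : Prop :=
  ∀ ε : ℝ, 0 < ε → ∃ N : ℕ, ∀ n ≥ N, S (x n) (x n) l < ε

/-- Statistical convergence of a sequence in an S-metric space. -/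
def SStatConvergesTo {X : Type*} (S : X → X → X → ℝ) (x : ℕ → X) (l : X) : Prop :=
  ∀ ε : ℝ, 0 < ε → HasDensity {n : ℕ | ε ≤ S (x n) (x n) l} 0

/-- Cauchy sequence in an S-metric space. -/
def SCauchy {X : Type*} (S : X → X → X → ℝ) (x : ℕ → X) : Prop :=
  ∀ ε : ℝ, 0 < ε → ∃ k : ℕ, ∀ n ≥ k, ∀ m ≥ k, S (x n) (x n) (x m) < ε

/-- Statistically Cauchy sequence in an S-metric space. -/
def SStatCauchy {X : Type*} (S : X → X → X → ℝ) (x : ℕ → X) : Prop :=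
  ∀ ε : ℝ, 0 < ε → ∃ N : ℕ, HasDensity {n : ℕ | ε ≤ S (x n) (x n) (x N)} 0

/-- Statistically bounded sequence in an S-metric space. -/
def SStatBounded {X : Type*} (S : X → X → X → ℝ) (x : ℕ → X) : Prop :=
  ∀ u : X, ∃ B : ℝ, 0 < B ∧ HasDensity {n : ℕ | B ≤ S (x n) (x n) u} 0

/-- Rough convergence with roughness degree `r`. -/
def SRoughConvergesTo {X : Type*} (S : X → X → X → ℝ) (r : ℝ) (x : ℕ → X) (p : X) : Prop :=
  ∀ ε : ℝ, 0 < ε → ∃ k : ℕ, ∀ n ≥ k, S (x n) (x n) p < r + ε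

/-- Rough statistical convergence with roughness degree `r`. -/
def SRoughStatConvergesTo {X : Type*} (S : X → X → X → ℝ) (r : ℝ) (x : ℕ → X) (p : X) : Prop :=
  ∀ ε : ℝ, 0 < ε → HasDensity {n : ℕ | r + ε ≤ S (x n) (x n) p} 0

/-- The rough statistical limit set `st-LIM^r x_n`. -/
def stLIM {X : Type*} (S : X → X → X → ℝ) (r : ℝ) (x : ℕ → X) : Set X :=
  {p : X | SRoughStatConvergesTo S r x p}

/-- The topology on `X` generated by the open balls of the S-metric. -/
def sBallTopology {X : Type*} (S : X → X → X → ℝ) : TopologicalSpace X :=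
  TopologicalSpace.generateFrom
    {B : Set X | ∃ c : X, ∃ ε : ℝ, 0 < ε ∧ B = {y : X | S y y c < ε}}

open scoped Classical in
lemma dens0_mono {A B : Set ℕ} (hAB : A ⊆ B) (hB : HasDensity B 0) : HasDensity A 0 := by
  unfold HasDensity at *
  refine squeeze_zero (fun n => by positivity) (fun n => ?_) hB
  have hcard : ((Finset.range n).filter (fun k => k ∈ A)).card ≤
      ((Finset.range n).filter (fun k => k ∈ B)).card := by
    apply Finset.card_le_card
    intro k hk
    simp only [Finset.mem_filter] at *
    exact ⟨hk.1, hAB hk.2⟩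
  gcongr <;> exact_mod_cast hcard

open scoped Classical in
lemma dens0_union {A B : Set ℕ} (hA : HasDensity A 0) (hB : HasDensity B 0) :
    HasDensity (A ∪ B) 0 := by
  unfold HasDensity at *
  have key := hA.add hB
  rw [add_zero] at key
  refine squeeze_zero (fun n => by positivity) (fun n => ?_) key
  rw [← add_div]
  have hsub : ((Finset.range n).filter (fun k => k ∈ A ∪ B)) ⊆
      ((Finset.range n).filter (fun k => k ∈ A)) ∪
      ((Finset.range n).filter (fun k => k ∈ B)) := by
    intro k hk
    simp only [Finset.mem_filter, Finset.mem_union, Set.mem_union] at *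
    tauto
  have hcard : ((Finset.range n).filter (fun k => k ∈ A ∪ B)).card ≤
      ((Finset.range n).filter (fun k => k ∈ A)).card +
      ((Finset.range n).filter (fun k => k ∈ B)).card :=
    (Finset.card_le_card hsub).trans (Finset.card_union_le _ _)
  gcongr
  have heq : (@Finset.filter ℕ (fun k => k ∈ A ∪ B) (fun a => Classical.propDecidable _)
      (Finset.range n)) = Finset.filter (fun k => k ∈ A ∪ B) (Finset.range n) := by congr
  rw [heq]
  exact_mod_cast hcard

open scoped Classical in
lemma dens0_finite {A : Set ℕ} {N : ℕ} (hA : ∀ n ∈ A, n < N) : HasDensity A 0 := by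
  unfold HasDensity
  refine squeeze_zero (f := fun n : ℕ =>
      (((Finset.range n).filter (fun k => k ∈ A)).card : ℝ) / n)
      (g := fun n : ℕ => (N : ℝ) / n) (fun n => by positivity) (fun n => ?_)
      (tendsto_const_div_atTop_nhds_zero_nat (N : ℝ))
  have hsub : ((Finset.range n).filter (fun k => k ∈ A)) ⊆ Finset.range N := by
    intro k hk
    simp only [Finset.mem_filter, Finset.mem_range] at *
    exact hA k hk.2
  have hcard : ((Finset.range n).filter (fun k => k ∈ A)).card ≤ N := by
    simpa using Finset.card_le_card hsub
  show (((Finset.range n).filter (fun k => k ∈ A)).card : ℝ) / n ≤ (N : ℝ) / n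
  gcongr <;> exact_mod_cast hcard

lemma S_symm {X : Type*} {S : X → X → X → ℝ} (hS : IsSMetric S) (x y : X) :
    S x x y = S y y x := by
  have h0 : ∀ z : X, S z z z = 0 := fun z => (hS.eq_zero_iff z z z).2 ⟨rfl, rfl⟩
  have h1 := hS.triangle x x y x
  have h2 := hS.triangle y y x y
  rw [h0 x] at h1
  rw [h0 y] at h2
  linarith

lemma key_dir {X : Type*} (S : X → X → X → ℝ) (hS : IsSMetric S)
    (r : ℝ) (ξs ηs : ℕ → X) (ξ : X)
    (h : Filter.Tendsto (fun n => S (ξs n) (ξs n) (ηs n)) Filter.atTop (nhds 0))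
    (hx : SRoughStatConvergesTo S r ξs ξ) : SRoughStatConvergesTo S r ηs ξ := by
  intro ε hε
  have hev : ∀ᶠ n in atTop, S (ξs n) (ξs n) (ηs n) < ε / 4 :=
    h.eventually (gt_mem_nhds (by positivity))
  obtain ⟨N, hN⟩ := eventually_atTop.1 hev
  have hC := hx (ε / 2) (by positivity)
  have hB : HasDensity {n : ℕ | ε / 4 ≤ S (ξs n) (ξs n) (ηs n)} 0 := by
    apply dens0_finite (N := N)
    intro n hn
    by_contra hc
    exact absurd (hN n (le_of_not_gt hc)) (not_lt.2 hn)
  have hsub : {n : ℕ | r + ε ≤ S (ηs n) (ηs n) ξ} ⊆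
      {n : ℕ | ε / 4 ≤ S (ξs n) (ξs n) (ηs n)} ∪ {n : ℕ | r + ε / 2 ≤ S (ξs n) (ξs n) ξ} := by
    intro n hn
    simp only [Set.mem_setOf_eq] at hn
    by_contra hc
    simp only [Set.mem_union, Set.mem_setOf_eq, not_or, not_le] at hc
    obtain ⟨h1, h2⟩ := hc
    have htri := hS.triangle (ηs n) (ηs n) ξ (ξs n)
    have hsym1 : S (ηs n) (ηs n) (ξs n) = S (ξs n) (ξs n) (ηs n) := S_symm hS _ _
    have hsym2 : S ξ ξ (ξs n) = S (ξs n) (ξs n) ξ := S_symm hS _ _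
    rw [hsym1, hsym2] at htri
    linarith
  exact dens0_mono hsub (dens0_union hB hC)

theorem stmt_18 {X : Type*} [Nonempty X] (S : X → X → X → ℝ) (hS : IsSMetric S)
    (r : ℝ) (hr : 0 ≤ r) (ξs ηs : ℕ → X) (ξ : X)
    (h : Filter.Tendsto (fun n => S (ξs n) (ξs n) (ηs n)) Filter.atTop (nhds 0)) :
    SRoughStatConvergesTo S r ξs ξ ↔ SRoughStatConvergesTo S r ηs ξ := by
  have h' : Filter.Tendsto (fun n => S (ηs n) (ηs n) (ξs n)) Filter.atTop (nhds 0) := by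
    simpa only [S_symm hS] using h
  exact ⟨key_dir S hS r ξs ηs ξ h, key_dir S hS r ηs ξs ξ h'⟩
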